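/- For every natural number k, b₁(k+1) = b₁(k) + b₂(k), i.e. a₁(2^{k+1} − 1) = a₁(2^k − 1) + a₂(2^k − 1). -/

import Mathlib

open Polynomial

/-- `a₁ n` : number of nonzero coefficients of `(1+x+x²)ⁿ` over `𝔽₂`. -/
noncomputable def a1 (n : ℕ) : ℕ :=
  (((1 + X + X ^ 2 : (ZMod 2)[X]) ^ n).support).card

/-- `a₂ n` : number of nonzero coefficients of `(1+x)(1+x+x²)ⁿ` over `𝔽₂`. -/
noncomputable def a2 (n : ℕ) : ℕ :=
  (((1 + X) * (1 + X + X ^ 2 : (ZMod 2)[X]) ^ n).support).card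

lemma sq_eq_expand (q : (ZMod 2)[X]) : q ^ 2 = expand (ZMod 2) 2 q := by
  have h := Polynomial.map_frobenius_expand 2 q
  rwa [ZMod.frobenius_zmod, Polynomial.map_id, eq_comm] at h

lemma support_expand2 (q : (ZMod 2)[X]) :
    (expand (ZMod 2) 2 q).support = q.support.image (2 * ·) := by
  ext n
  simp only [mem_support_iff, Finset.mem_image, coeff_expand (by norm_num : (0:ℕ) < 2)]
  constructor
  · intro h
    split_ifs at h with hd
    · obtain ⟨m, hm⟩ := hd
      exact ⟨m, by simpa [hm, Nat.mul_div_cancel_left] using h, hm.symm⟩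
    · exact absurd rfl h
  · rintro ⟨m, hm, rfl⟩
    rw [if_pos ⟨m, rfl⟩, Nat.mul_div_cancel_left _ (by norm_num)]
    exact hm

lemma support_X_mul' (q : (ZMod 2)[X]) :
    (X * q).support = q.support.image (· + 1) := by
  ext n
  simp only [mem_support_iff, Finset.mem_image]
  cases n with
  | zero => simp [coeff_mul_X_zero, mul_comm]
  | succ m =>
    rw [coeff_X_mul]
    constructor
    · intro h; exact ⟨m, h, rfl⟩
    · rintro ⟨m', hm', hm''⟩
      have : m' = m := by omega
      rwa [this] at hm'

lemma support_add_disj {A B : (ZMod 2)[X]} (h : Disjoint A.support B.support) :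
    (A + B).support = A.support ∪ B.support := by
  classical
  rw [Polynomial.support, Polynomial.toFinsupp_add, AddMonoidAlgebra.coeff_add, Finsupp.support_add_eq h]
  rfl

theorem b1_succ (k : ℕ) : a1 (2 ^ (k + 1) - 1) = a1 (2 ^ k - 1) + a2 (2 ^ k - 1) := by
  classical
  set p : (ZMod 2)[X] := 1 + X + X ^ 2 with hp
  set n := 2 ^ k - 1 with hn
  set q : (ZMod 2)[X] := p ^ n with hq
  have hpow : 2 ^ (k + 1) - 1 = 2 * n + 1 := by
    have : 1 ≤ 2 ^ k := Nat.one_le_two_pow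
    rw [hn, pow_succ]; omega
  have hpsplit : p = (1 + X) ^ 2 + X := by
    have h2 : (2 : (ZMod 2)[X]) = 0 := by
      have := CharP.cast_eq_zero ((ZMod 2)[X]) 2
      simpa using this
    rw [hp]
    linear_combination (-X : (ZMod 2)[X]) * h2
  have key : p ^ (2 ^ (k + 1) - 1)
      = expand (ZMod 2) 2 ((1 + X) * q) + X * expand (ZMod 2) 2 q := by
    rw [hpow, ← sq_eq_expand, ← sq_eq_expand]
    calc p ^ (2 * n + 1) = ((1 + X) ^ 2 + X) * (p ^ n) ^ 2 := by
          rw [← hpsplit, ← pow_mul]; ring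
      _ = ((1 + X) * q) ^ 2 + X * q ^ 2 := by rw [hq]; ring
  have hdisj : Disjoint (expand (ZMod 2) 2 ((1 + X) * q)).support
      (X * expand (ZMod 2) 2 q).support := by
    rw [support_expand2, support_X_mul', support_expand2, Finset.image_image]
    rw [Finset.disjoint_left]
    rintro a ha hb
    simp only [Finset.mem_image, Function.comp] at ha hb
    obtain ⟨x, -, hx⟩ := ha
    obtain ⟨y, -, hy⟩ := hb
    omega
  have himg1 : (expand (ZMod 2) 2 ((1 + X) * q)).support.card
      = ((1 + X) * q).support.card := by
    rw [support_expand2]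
    exact Finset.card_image_of_injective _ (fun a b => by omega)
  have himg2 : (X * expand (ZMod 2) 2 q).support.card = q.support.card := by
    rw [support_X_mul', support_expand2, Finset.image_image]
    exact Finset.card_image_of_injective _ (fun a b h => by
      simp only [Function.comp] at h; omega)
  simp only [a1, a2, ← hp]
  rw [key, support_add_disj hdisj, Finset.card_union_of_disjoint hdisj, himg1, himg2]
  exact Nat.add_comm _ _
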